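/- For every integer D ≥ 1, one has the polynomial identity \bar F_{1,D}(x_1,…,x_D) = (1/(D−1)!) · ∏_{1≤i<j≤D}(x_j−x_i). -/

import Mathlib

open Nat Finset

/-- The Vandermonde product `∏_{1 ≤ i < j ≤ D} (x_j − x_i)`. -/
noncomputable def vand (D : ℕ) : MvPolynomial (Fin D) ℚ :=
  ∏ p ∈ Finset.univ.filter (fun p : Fin D × Fin D => p.1 < p.2),
    (MvPolynomial.X p.2 - MvPolynomial.X p.1)

/-- `F̄_{r,D}(x_1,…,x_D)`: the determinant of the rD×rD matrix whose rows are indexed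
(in lexicographic order) by pairs `(i,j)` encoding the row number `k = i·D + j ∈ {0,…,rD−1}`,
and whose columns are indexed by pairs `(m,v)` with `0 ≤ m ≤ r−1`, `1 ≤ v ≤ D` (lex order).
The first r rows (`k < r`, so `k = m'`) have entry 1 if `m = m'` and 0 otherwise; the
remaining rows correspond to `n = k − r + 1 ∈ {1,…,rD−r}` and have entry `B_{n+m}(x_v)/(n+m)`. -/
noncomputable def Fbar (r D : ℕ) : MvPolynomial (Fin D) ℚ :=
  Matrix.det (Matrix.of fun (p q : Fin r × Fin D) =>
    if (p.1 : ℕ) * D + (p.2 : ℕ) < r then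
      (if (q.1 : ℕ) = (p.1 : ℕ) * D + (p.2 : ℕ) then 1 else 0)
    else
      MvPolynomial.C ((((p.1 : ℕ) * D + (p.2 : ℕ) - r + 1 + (q.1 : ℕ) : ℕ) : ℚ))⁻¹ *
        Polynomial.aeval (MvPolynomial.X q.2)
          (Polynomial.bernoulli ((p.1 : ℕ) * D + (p.2 : ℕ) - r + 1 + (q.1 : ℕ))))

/-- `Δ̄_{r,D}`: the determinant of the analogous rD×rD rational matrix whose first r rows
have entry `(−D)^{m'}` if `m = m'` and 0 otherwise, and whose remaining rows (indexed by
`n = 1,…,rD−r`) have `(n,(m,v))` entry `D^{n+m−1}·B_{n+m}(v/D)/(n+m)`. -/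
noncomputable def deltaBar (r D : ℕ) : ℚ :=
  Matrix.det (Matrix.of fun (p q : Fin r × Fin D) =>
    if (p.1 : ℕ) * D + (p.2 : ℕ) < r then
      (if (q.1 : ℕ) = (p.1 : ℕ) * D + (p.2 : ℕ) then (-(D : ℚ)) ^ ((p.1 : ℕ) * D + (p.2 : ℕ)) else 0)
    else
      (D : ℚ) ^ ((p.1 : ℕ) * D + (p.2 : ℕ) - r + (q.1 : ℕ)) *
        (Polynomial.bernoulli ((p.1 : ℕ) * D + (p.2 : ℕ) - r + 1 + (q.1 : ℕ))).eval
          (((q.2 : ℕ) + 1 : ℚ) / D) /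
        (((p.1 : ℕ) * D + (p.2 : ℕ) - r + 1 + (q.1 : ℕ) : ℕ) : ℚ))


lemma bern_coeff_top (n : ℕ) : (Polynomial.bernoulli n).coeff n = 1 := by
  rw [Polynomial.bernoulli, Polynomial.finset_sum_coeff]
  rw [Finset.sum_eq_single 0]
  · simp
  · intro i hi hi0
    rw [Finset.mem_range, Nat.lt_succ_iff] at hi
    rw [Polynomial.coeff_monomial, if_neg]
    omega
  · simp

lemma bern_natDegree_le (n : ℕ) : (Polynomial.bernoulli n).natDegree ≤ n := by
  apply Polynomial.natDegree_sum_le_of_forall_le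
  intro i hi
  exact (Polynomial.natDegree_monomial_le _).trans (Nat.sub_le _ _)

lemma bern_monic (n : ℕ) : (Polynomial.bernoulli n).Monic :=
  Polynomial.monic_of_natDegree_le_of_coeff_eq_one n (bern_natDegree_le n) (bern_coeff_top n)

lemma bern_natDegree (n : ℕ) : (Polynomial.bernoulli n).natDegree = n :=
  Polynomial.natDegree_eq_of_le_of_coeff_ne_zero (bern_natDegree_le n)
    (by rw [bern_coeff_top]; exact one_ne_zero)

lemma vand_reindex {D : ℕ} (f : Fin D → Fin D → MvPolynomial (Fin D) ℚ) :
    ∏ p ∈ Finset.univ.filter (fun p : Fin D × Fin D => p.1 < p.2), f p.1 p.2 =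
      ∏ i : Fin D, ∏ j ∈ Ioi i, f i j := by
  rw [Finset.prod_sigma']
  refine Finset.prod_bij' (fun (p : Fin D × Fin D) _ => (⟨p.1, p.2⟩ : Σ _ : Fin D, Fin D))
    (fun p _ => (p.1, p.2)) ?_ ?_ ?_ ?_ ?_
  · intro p hp; simp at hp ⊢; exact hp
  · intro p hp; simp at hp ⊢; exact hp
  · intro p _; rfl
  · intro p _; rfl
  · intro p _; rfl

lemma fact_prod (D : ℕ) (hD : 1 ≤ D) :
    (∏ i : Fin D, (if (i : ℕ) = 0 then (1:ℚ) else ((i : ℕ) : ℚ)⁻¹)) = (((D - 1)! : ℚ))⁻¹ := by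
  rw [Fin.prod_univ_eq_prod_range (fun i => if i = 0 then (1:ℚ) else (i : ℚ)⁻¹)]
  induction D with
  | zero => omega
  | succ n ih =>
    rcases Nat.eq_or_lt_of_le hD with h | h
    · simp [← h]
    · have hn : 1 ≤ n := by omega
      rw [Finset.prod_range_succ, ih hn, if_neg (by omega)]
      rw [Nat.succ_sub_one]
      rw [← Nat.mul_factorial_pred (by omega : n ≠ 0)]
      push_cast
      rw [mul_inv]
      ring

/-- For every D ≥ 1, `F̄_{1,D}(x_1,…,x_D) = (1/(D−1)!)·∏_{i<j}(x_j−x_i)`. -/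
theorem Fbar_one_D (D : ℕ) (hD : 1 ≤ D) :
    Fbar 1 D = MvPolynomial.C (((D - 1)! : ℚ))⁻¹ * vand D := by
  classical
  set S := MvPolynomial (Fin D) ℚ with hS
  let rq : ℚ →+* S := algebraMap ℚ S
  let e : Fin D ≃ Fin 1 × Fin D :=
    { toFun := fun j => ((0 : Fin 1), j), invFun := Prod.snd,
      left_inv := fun _ => rfl,
      right_inv := fun p => Prod.ext (Subsingleton.elim _ _) rfl }
  let c : Fin D → ℚ := fun i => if (i : ℕ) = 0 then 1 else ((i : ℕ) : ℚ)⁻¹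
  let q : Fin D → Polynomial S := fun i => (Polynomial.bernoulli (i : ℕ)).map rq
  let N : Matrix (Fin D) (Fin D) S :=
    Matrix.of fun i j => (MvPolynomial.C (c j) : S) * (q j).eval (MvPolynomial.X i)
  have hB : Fbar 1 D = N.transpose.det := by
    rw [Fbar, ← Matrix.det_submatrix_equiv_self e]
    congr 1
    ext i j
    simp only [Matrix.submatrix_apply, Matrix.of_apply, Matrix.transpose_apply, N, e,
      Equiv.coe_fn_mk, Fin.val_zero, zero_mul, zero_add, c, q]
    by_cases hi : (i : ℕ) = 0
    · rw [if_pos (by omega), if_pos (by omega), if_pos hi, hi]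
      simp [rq]
    · rw [if_neg (by omega), if_neg hi]
      have h1 : (i : ℕ) - 1 + 1 + 0 = (i : ℕ) := by omega
      rw [h1, Polynomial.eval_map, Polynomial.aeval_def]
  have hdeg : ∀ i : Fin D, (q i).natDegree = (i : ℕ) := fun i => by
    rw [(bern_monic _).natDegree_map, bern_natDegree]
  have hmon : ∀ i : Fin D, (q i).Monic := fun i => (bern_monic _).map rq
  have hA : (Matrix.of fun i j : Fin D => (q j).eval (MvPolynomial.X i)).det
      = (Matrix.vandermonde (fun i : Fin D => (MvPolynomial.X i : S))).det :=
    (Matrix.det_eval_matrixOfPolynomials_eq_det_vandermonde _ _ hdeg hmon).symm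
  rw [hB, Matrix.det_transpose]
  have : N = Matrix.of fun i j =>
      (MvPolynomial.C (c j) : S) *
        (Matrix.of fun i j : Fin D => (q j).eval (MvPolynomial.X i)) i j := rfl
  rw [this, Matrix.det_mul_row, hA, Matrix.det_vandermonde]
  rw [← map_prod, fact_prod D hD, vand,
    vand_reindex (fun i j => MvPolynomial.X j - MvPolynomial.X i)]
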